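/- Any space of homogeneous type (X,d,μ) is outer regular on Borel sets: for every Borel set E ⊆ X one has μ(E) = inf{ μ(G) : G open, G ⊇ E }. -/

import Mathlib

open MeasureTheory Filter Set Topology
open scoped ENNReal

/-- A quasi-distance on `X` with quasi-triangle constant `K`. -/
structure IsQuasiDist {X : Type*} (d : X → X → ℝ) (K : ℝ) : Prop where
  nonneg : ∀ x y, 0 ≤ d x y
  eq_zero_iff : ∀ x y, d x y = 0 ↔ x = y
  symm : ∀ x y, d x y = d y x
  one_le_K : 1 ≤ K
  triangle : ∀ x y z, d x y ≤ K * (d x z + d z y)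

/-- The topology on `X` is the one induced by the quasi-distance `d`:
a set is open iff around any of its points it contains a `d`-ball. -/
def InducedByQuasiDist {X : Type*} [TopologicalSpace X] (d : X → X → ℝ) : Prop :=
  ∀ G : Set X, IsOpen G ↔ ∀ x ∈ G, ∃ r > 0, {y | d y x < r} ⊆ G

/-- `SetSep d A B` means `dist(A,B) > 0`.  The relation `A ⋐ B` of the paper is
`SetSep d A Bᶜ`. -/
def SetSep {X : Type*} (d : X → X → ℝ) (A B : Set X) : Prop :=
  ∃ δ > 0, ∀ x ∈ A, ∀ y ∈ B, δ ≤ d x y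

/-- `(X,d,μ)` is a space of homogeneous type: `d` is a quasi-distance inducing the
topology of `X`, the σ-algebra contains all Borel sets and all balls, and `μ`
satisfies the doubling condition `μ(B(x,2r)) ≤ C·μ(B(x,r)) < ∞`. -/
structure IsHomType {X : Type*} [TopologicalSpace X] [MeasurableSpace X]
    (d : X → X → ℝ) (μ : Measure X) (K : ℝ) (C : ℝ≥0∞) : Prop where
  quasi : IsQuasiDist d K
  induced : InducedByQuasiDist d
  open_meas : ∀ G : Set X, IsOpen G → MeasurableSet G
  ball_meas : ∀ x r, MeasurableSet {y | d y x < r}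
  doubling : ∀ x r, 0 < r → μ {y | d y x < 2 * r} ≤ C * μ {y | d y x < r}
  ball_lt_top : ∀ x r, 0 < r → μ {y | d y x < r} < ⊤

variable {X : Type*}

/-- `U` is a sequence of linear operators `L¹(X) → M(X)`: each `U n` is linear on
integrable functions, respects a.e. equality of integrable functions, and sends
integrable functions to measurable functions. -/
structure OpSeq [MeasurableSpace X] (μ : Measure X) (U : ℕ → (X → ℝ) → X → ℝ) : Prop where
  lin : ∀ n (f g : X → ℝ) (a b : ℝ), Integrable f μ → Integrable g μ →
    U n (fun x => a * f x + b * g x) = fun x => a * U n f x + b * U n g x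
  congr : ∀ n (f g : X → ℝ), Integrable f μ → f =ᵐ[μ] g → U n f = U n g
  meas : ∀ n (f : X → ℝ), Integrable f μ → Measurable (U n f)

/-- Property (P1): each `U n` is bounded from `L¹(X)` to `M(X)`. -/
def PropP1 [MeasurableSpace X] (μ : Measure X) (U : ℕ → (X → ℝ) → X → ℝ) : Prop :=
  ∀ n, ∃ ρ : ℝ, ∀ f : X → ℝ, Integrable f μ → ∀ x, |U n f x| ≤ ρ * ∫ y, |f y| ∂μ

/-- Property (P2): the `U n` are uniformly bounded from `L^∞(X)` to `M(X)`. -/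
def PropP2 [MeasurableSpace X] (μ : Measure X) (U : ℕ → (X → ℝ) → X → ℝ) : Prop :=
  ∃ ϱ : ℝ, ∀ n (f : X → ℝ), Integrable f μ → ∀ M : ℝ, (∀ x, |f x| ≤ M) →
    ∀ x, |U n f x| ≤ ϱ * M

/-- Property (P3): if `f ∈ L¹(X)` is constant on an open set `G`, then `U n f`
converges uniformly on every set `E ⋐ G`. -/
def PropP3 [TopologicalSpace X] [MeasurableSpace X] (d : X → X → ℝ) (μ : Measure X)
    (U : ℕ → (X → ℝ) → X → ℝ) : Prop :=
  ∀ f : X → ℝ, Integrable f μ → ∀ G : Set X, IsOpen G → ∀ c : ℝ, (∀ x ∈ G, f x = c) →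
    ∀ E : Set X, SetSep d E Gᶜ →
      ∃ g : X → ℝ, TendstoUniformlyOn (fun n x => U n f x) g atTop E

/-- Property (P4): if `G` is open with `μ G < ∞` then `U n 𝟙_G → 𝟙_G` a.e. -/
def PropP4 [TopologicalSpace X] [MeasurableSpace X] (μ : Measure X)
    (U : ℕ → (X → ℝ) → X → ℝ) : Prop :=
  ∀ G : Set X, IsOpen G → μ G < ⊤ →
    ∀ᵐ x ∂μ, Tendsto (fun n => U n (G.indicator fun _ => (1 : ℝ)) x) atTop
      (𝓝 (G.indicator (fun _ => (1 : ℝ)) x))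

/-- The set `λ(A) = A ∪ {x : limsup |U n 𝟙_A (x)| > 0}`. -/
noncomputable def lambdaSet (U : ℕ → (X → ℝ) → X → ℝ) (A : Set X) : Set X :=
  A ∪ {x | 0 < Filter.limsup (fun n => ((|U n (A.indicator fun _ => (1 : ℝ)) x| : ℝ) : EReal)) atTop}

/-- The combined operator `U_{(Ω,ν)}(f)(x) = Σ_k U_{ν(ω_k)}(f)(x)·𝟙_{ω_k}(x)`. -/
noncomputable def UPart (U : ℕ → (X → ℝ) → X → ℝ) (ω : ℕ → Set X) (ν : ℕ → ℕ)
    (f : X → ℝ) (x : X) : ℝ :=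
  ∑' k, (ω k).indicator (U (ν k) f) x

section OuterRegularAux
variable {d : X → X → ℝ} {K : ℝ}

def ballInt (d : X → X → ℝ) (A : Set X) : Set X := {x | ∃ r > 0, {y | d y x < r} ⊆ A}

lemma ballInt_subset (A : Set X) (hq : IsQuasiDist d K) : ballInt d A ⊆ A := by
  rintro x ⟨r, hr, hsub⟩
  exact hsub (by simpa [(hq.eq_zero_iff x x).2 rfl] using hr)

lemma ballInt_mono {A B : Set X} (h : A ⊆ B) : ballInt d A ⊆ ballInt d B := by
  rintro x ⟨r, hr, hsub⟩; exact ⟨r, hr, hsub.trans h⟩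

lemma hK_pos (hq : IsQuasiDist d K) : 0 < K := lt_of_lt_of_le one_pos hq.one_le_K

lemma ballInt_isOpen [TopologicalSpace X] (hq : IsQuasiDist d K)
    (hi : InducedByQuasiDist d) (A : Set X) : IsOpen (ballInt d A) := by
  rw [hi]
  rintro x ⟨r, hr, hsub⟩
  have hK : 0 < K := hK_pos hq
  refine ⟨r / (2 * K), by positivity, ?_⟩
  intro y hy
  refine ⟨r / (2 * K), by positivity, fun z hz => hsub ?_⟩
  have h1 : d z x ≤ K * (d z y + d y x) := hq.triangle z x y
  have h2 : d z y < r / (2 * K) := hz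
  have h3 : d y x < r / (2 * K) := hy
  have h4 : K * (r / (2 * K)) = r / 2 := by field_simp
  have : K * (d z y + d y x) < K * (r / (2 * K) + r / (2 * K)) := by
    apply mul_lt_mul_of_pos_left (by linarith) hK
  show d z x < r
  nlinarith

lemma closed_eq_iInter [TopologicalSpace X] (hq : IsQuasiDist d K)
    (hi : InducedByQuasiDist d) {F : Set X} (hF : IsClosed F) :
    ∃ W : ℕ → Set X, (∀ n, IsOpen (W n)) ∧ (∀ n, F ⊆ W n) ∧ Antitone W ∧ (⋂ n, W n) = F := by
  set N : ℕ → Set X := fun n => {z | ∃ y ∈ F, d z y < 1 / (n + 1)} with hN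
  refine ⟨fun n => ballInt d (N n), fun n => ballInt_isOpen hq hi _, ?_, ?_, ?_⟩
  · intro n y hy
    refine ⟨1 / (n + 1), by positivity, fun z hz => ⟨y, hy, hz⟩⟩
  · intro m n hmn
    apply ballInt_mono
    rintro z ⟨y, hy, hzy⟩
    refine ⟨y, hy, hzy.trans_le ?_⟩
    apply one_div_le_one_div_of_le (by positivity)
    exact_mod_cast by exact_mod_cast Nat.add_le_add_right hmn 1
  · apply Subset.antisymm
    · intro x hx
      by_contra hxF
      have hopen : IsOpen Fᶜ := hF.isOpen_compl
      obtain ⟨r, hr, hsub⟩ := (hi Fᶜ).1 hopen x hxF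
      obtain ⟨n, hn⟩ := exists_nat_one_div_lt hr
      have hxn : x ∈ N n := ballInt_subset _ hq (mem_iInter.1 hx n)
      obtain ⟨y, hyF, hxy⟩ := hxn
      have : d y x < r := by rw [hq.symm y x]; calc d x y < 1 / (n + 1) := hxy
                                                  _ < r := hn
      exact hsub this hyF
    · intro x hx
      apply mem_iInter.2
      intro n
      exact (show ∃ r > (0:ℝ), {y | d y x < r} ⊆ N n from ⟨1 / (n + 1), by positivity, fun z hz => ⟨x, hx, hz⟩⟩)

lemma open_eq_iUnion [TopologicalSpace X] (hq : IsQuasiDist d K)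
    (hi : InducedByQuasiDist d) {U : Set X} (hU : IsOpen U) :
    ∃ F : ℕ → Set X, (∀ n, IsClosed (F n)) ∧ Monotone F ∧ (∀ n, F n ⊆ U) ∧ (⋃ n, F n) = U := by
  obtain ⟨W, hWo, hWsub, hWanti, hWeq⟩ := closed_eq_iInter hq hi hU.isClosed_compl
  refine ⟨fun n => (W n)ᶜ, fun n => (hWo n).isClosed_compl,
    fun m n hmn => compl_subset_compl.2 (hWanti hmn), fun n => ?_, ?_⟩
  · rw [compl_subset_comm]; exact hWsub n
  · rw [← compl_iInter, hWeq, compl_compl]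

section ENNAux
lemma aux_le_add {ι : Type*} [Nonempty ι] (f : ι → ℝ≥0∞) (a ε : ℝ≥0∞) (ha : a ≠ ⊤)
    (h : a ≤ ⨆ i, f i) (hε : 0 < ε) : ∃ i, a ≤ f i + ε := by
  by_cases hc : a ≤ ε
  · exact ⟨Classical.arbitrary ι, hc.trans le_add_self⟩
  · push_neg at hc
    have h0 : a ≠ 0 := (hε.trans hc).ne'
    have hlt : a - ε < a := ENNReal.sub_lt_self ha h0 hε.ne'
    obtain ⟨i, hi⟩ := lt_iSup_iff.mp (hlt.trans_le h)
    exact ⟨i, tsub_le_iff_right.mp hi.le⟩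

lemma aux_le_add_tsum (f : ℕ → ℝ≥0∞) (a ε : ℝ≥0∞) (ha : a ≠ ⊤)
    (h : a ≤ ∑' i, f i) (hε : 0 < ε) : ∃ s : Finset ℕ, a ≤ (∑ i ∈ s, f i) + ε := by
  rw [ENNReal.tsum_eq_iSup_sum] at h
  exact aux_le_add _ a ε ha h hε

lemma aux_geom (c : ℝ≥0∞) : ∑' i : ℕ, c / 2 / 2 ^ i = c := by
  have : ∀ i : ℕ, c / 2 / 2 ^ i = c / 2 * 2⁻¹ ^ i := by
    intro i; rw [div_eq_mul_inv (c / 2), ENNReal.inv_pow]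
  simp_rw [this]
  rw [ENNReal.tsum_mul_left, ENNReal.tsum_geometric, ENNReal.one_sub_inv_two, inv_inv]
  exact ENNReal.div_mul_cancel two_ne_zero ENNReal.ofNat_ne_top
end ENNAux

lemma borel_induction_on_open [TopologicalSpace X] {C : Set X → Prop}
    (h_open : ∀ U : Set X, IsOpen U → C U)
    (h_compl : ∀ t : Set X, MeasurableSet[borel X] t → C t → C tᶜ)
    (h_union : ∀ f : ℕ → Set X, Pairwise (Function.onFun Disjoint f) →
      (∀ i, MeasurableSet[borel X] (f i)) → (∀ i, C (f i)) → C (⋃ i, f i)) :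
    ∀ ⦃t : Set X⦄, MeasurableSet[borel X] t → C t := by
  letI : MeasurableSpace X := borel X
  haveI : BorelSpace X := ⟨rfl⟩
  exact MeasurableSet.induction_on_open h_open h_compl h_union

lemma regular_of_finite [TopologicalSpace X] [MeasurableSpace X]
    {d : X → X → ℝ} {K : ℝ} (hq : IsQuasiDist d K) (hi : InducedByQuasiDist d)
    (hom : ∀ G : Set X, IsOpen G → MeasurableSet G)
    (ν : Measure X) [IsFiniteMeasure ν] {E : Set X} (hE : MeasurableSet[borel X] E) :
    ∀ ε : ℝ≥0∞, 0 < ε →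
      ∃ G F : Set X, IsOpen G ∧ IsClosed F ∧ F ⊆ E ∧ E ⊆ G ∧ ν G ≤ ν F + ε := by
  have hle : borel X ≤ ‹MeasurableSpace X› :=
    MeasurableSpace.generateFrom_le (fun t ht => hom t ht)
  set C : Set X → Prop := fun s => ∀ ε : ℝ≥0∞, 0 < ε →
    ∃ G F : Set X, IsOpen G ∧ IsClosed F ∧ F ⊆ s ∧ s ⊆ G ∧ ν G ≤ ν F + ε with hCdef
  have main : ∀ ⦃t : Set X⦄, MeasurableSet[borel X] t → C t := by
    refine borel_induction_on_open ?_ ?_ ?_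
    · -- open sets
      intro U hU ε hε
      obtain ⟨F, hFcl, hFmono, hFsub, hFeq⟩ := open_eq_iUnion hq hi hU
      have hsup : ν U = ⨆ n, ν (F n) := by rw [← hFeq]; exact hFmono.measure_iUnion
      obtain ⟨n, hn⟩ := aux_le_add (fun n => ν (F n)) (ν U) ε (measure_ne_top ν U) hsup.le hε
      exact ⟨U, F n, hU, hFcl n, hFsub n, Subset.rfl, hn⟩
    · -- complements
      intro t ht hCt ε hε
      obtain ⟨G, F, hG, hF, hFt, htG, hν⟩ := hCt ε hε
      have hGm : MeasurableSet G := hom G hG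
      have hFm : MeasurableSet F := by simpa using (hom Fᶜ hF.isOpen_compl).compl
      refine ⟨Fᶜ, Gᶜ, hF.isOpen_compl, hG.isClosed_compl,
        compl_subset_compl.2 htG, compl_subset_compl.2 hFt, ?_⟩
      rw [← ENNReal.add_le_add_iff_right (measure_ne_top ν G)]
      calc ν Fᶜ + ν G ≤ ν Fᶜ + (ν F + ε) := add_le_add_right hν _
        _ = (ν F + ν Fᶜ) + ε := by ring
        _ = ν univ + ε := by rw [measure_add_measure_compl hFm]
        _ = (ν G + ν Gᶜ) + ε := by rw [measure_add_measure_compl hGm]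
        _ = ν Gᶜ + ε + ν G := by ring
    · -- disjoint unions
      intro f hdisj hmeas hCf ε hε
      have hfm : ∀ i, MeasurableSet (f i) := fun i => hle _ (hmeas i)
      set η := ε / 2 / 2 with hη
      have hη0 : 0 < η :=
        ENNReal.div_pos (ENNReal.div_pos hε.ne' ENNReal.ofNat_ne_top).ne' ENNReal.ofNat_ne_top
      set δ : ℕ → ℝ≥0∞ := fun i => η / 2 / 2 ^ i with hδ
      have hδ0 : ∀ i, 0 < δ i := fun i =>
        ENNReal.div_pos (ENNReal.div_pos hη0.ne' ENNReal.ofNat_ne_top).ne'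
          (ENNReal.pow_ne_top ENNReal.ofNat_ne_top)
      have hδsum : ∑' i, δ i = η := aux_geom η
      choose G F hGo hFc hFsub hsubG hνGF using fun i => hCf i (δ i) (hδ0 i)
      have hνG : ∀ i, ν (G i) ≤ ν (f i) + δ i := fun i =>
        (hνGF i).trans (add_le_add_left (measure_mono (hFsub i)) _)
      have hνf : ∀ i, ν (f i) ≤ ν (F i) + δ i := fun i =>
        (measure_mono (hsubG i)).trans (hνGF i)
      have hsum : ν (⋃ i, f i) = ∑' i, ν (f i) := measure_iUnion hdisj hfm
      have houter : ν (⋃ i, G i) ≤ ν (⋃ i, f i) + η := by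
        calc ν (⋃ i, G i) ≤ ∑' i, ν (G i) := measure_iUnion_le G
          _ ≤ ∑' i, (ν (f i) + δ i) := ENNReal.tsum_le_tsum hνG
          _ = (∑' i, ν (f i)) + ∑' i, δ i := ENNReal.tsum_add
          _ = ν (⋃ i, f i) + η := by rw [hsum, hδsum]
      obtain ⟨s, hs⟩ := aux_le_add_tsum (fun i => ν (f i)) (ν (⋃ i, f i)) η
        (measure_ne_top _ _) hsum.le hη0
      have hFdisj : (↑s : Set ℕ).PairwiseDisjoint F := fun i _ j _ hij =>
        (hdisj hij).mono (hFsub i) (hFsub j)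
      have hFmeas : ∀ i ∈ s, MeasurableSet (F i) := fun i _ => by
        simpa using (hom (F i)ᶜ (hFc i).isOpen_compl).compl
      have hFfin : ν (⋃ i ∈ s, F i) = ∑ i ∈ s, ν (F i) := measure_biUnion_finset hFdisj hFmeas
      have hinner : ν (⋃ i, f i) ≤ ν (⋃ i ∈ s, F i) + η + η := by
        calc ν (⋃ i, f i) ≤ (∑ i ∈ s, ν (f i)) + η := hs
          _ ≤ (∑ i ∈ s, (ν (F i) + δ i)) + η :=
            add_le_add_left (Finset.sum_le_sum (fun i _ => hνf i)) _
          _ = ((∑ i ∈ s, ν (F i)) + ∑ i ∈ s, δ i) + η := by rw [Finset.sum_add_distrib]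
          _ ≤ ((∑ i ∈ s, ν (F i)) + η) + η := by
            gcongr
            exact (ENNReal.sum_le_tsum s).trans hδsum.le
          _ = ν (⋃ i ∈ s, F i) + η + η := by rw [hFfin]
      have h3 : η + η + η ≤ ε := by
        have h2 : η + η = ε / 2 := ENNReal.add_halves (ε / 2)
        calc η + η + η = ε / 2 + η := by rw [h2]
          _ ≤ ε / 2 + ε / 2 := add_le_add_right (by rw [hη]; exact ENNReal.half_le_self) _
          _ = ε := ENNReal.add_halves ε
      refine ⟨⋃ i, G i, ⋃ i ∈ s, F i, isOpen_iUnion hGo,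
        s.finite_toSet.isClosed_biUnion (fun i _ => hFc i),
        iUnion₂_subset (fun i _ => (hFsub i).trans (subset_iUnion f i)),
        iUnion_mono hsubG, ?_⟩
      calc ν (⋃ i, G i) ≤ ν (⋃ i, f i) + η := houter
        _ ≤ (ν (⋃ i ∈ s, F i) + η + η) + η := add_le_add_left hinner _
        _ = ν (⋃ i ∈ s, F i) + (η + η + η) := by ring
        _ ≤ ν (⋃ i ∈ s, F i) + ε := add_le_add_right h3 _
  exact main hE

end OuterRegularAux

/-- **Lemma (outer regularity).**  Every space of homogeneous type is outer regular
on Borel sets: `μ E = inf { μ G : G open, E ⊆ G }`. -/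
theorem stmt5 [TopologicalSpace X] [MeasurableSpace X] (d : X → X → ℝ) (μ : Measure X)
    (K : ℝ) (C : ℝ≥0∞) (hX : IsHomType d μ K C)
    (E : Set X) (hE : MeasurableSet[borel X] E) :
    μ E = ⨅ (G : Set X) (_ : IsOpen G) (_ : E ⊆ G), μ G := by
  have hq := hX.quasi
  have hi := hX.induced
  have hom := hX.open_meas
  have hle : borel X ≤ ‹MeasurableSpace X› :=
    MeasurableSpace.generateFrom_le (fun t ht => hom t ht)
  refine le_antisymm (le_iInf fun G => le_iInf fun hG => le_iInf fun hEG => measure_mono hEG) ?_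
  apply ENNReal.le_of_forall_pos_le_add
  intro ε hε _
  have key : ∃ G' : Set X, IsOpen G' ∧ E ⊆ G' ∧ μ G' ≤ μ E + ε := by
    rcases isEmpty_or_nonempty X with hempty | hne
    · refine ⟨∅, isOpen_empty, fun x _ => (IsEmpty.false x).elim, by simp⟩
    · obtain ⟨x₀⟩ := hne
      set U : ℕ → Set X := fun n => ballInt d {y | d y x₀ < n + 1} with hU
      have hUopen : ∀ n, IsOpen (U n) := fun n => ballInt_isOpen hq hi _
      have hUuniv : ⋃ n, U n = univ := by
        apply eq_univ_of_forall
        intro x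
        obtain ⟨n, hn⟩ := exists_nat_ge (K * (1 + d x x₀))
        refine mem_iUnion.2 ⟨n, 1, one_pos, ?_⟩
        intro z hz
        have h1 : d z x₀ ≤ K * (d z x + d x x₀) := hq.triangle z x₀ x
        have h2 : d z x < 1 := hz
        have hK : 0 < K := hK_pos hq
        have h0 : 0 ≤ d x x₀ := hq.nonneg x x₀
        show d z x₀ < (n : ℝ) + 1
        nlinarith [mul_pos hK (by linarith : (0:ℝ) < 1 - d z x)]
      have hUfin : ∀ n, μ (U n) < ⊤ := fun n =>
        lt_of_le_of_lt (measure_mono (ballInt_subset _ hq))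
          (hX.ball_lt_top x₀ (n + 1) (by positivity))
      set A : ℕ → Set X := fun n => E ∩ disjointed U n with hA
      have hUb : ∀ n, MeasurableSet[borel X] (U n) := fun n =>
        MeasurableSpace.measurableSet_generateFrom (hUopen n)
      have hAb : ∀ n, MeasurableSet[borel X] (A n) := fun n =>
        hE.inter (MeasurableSet.disjointed hUb n)
      have hAdisj : Pairwise (Function.onFun Disjoint A) := fun i j hij =>
        ((disjoint_disjointed U) hij).mono inter_subset_right inter_subset_right
      have hAsub : ∀ n, A n ⊆ U n := fun n =>
        inter_subset_right.trans (disjointed_subset U n)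
      have hAE : ⋃ n, A n = E := by
        rw [hA, ← inter_iUnion, iUnion_disjointed, hUuniv, inter_univ]
      set δ : ℕ → ℝ≥0∞ := fun n => (ε : ℝ≥0∞) / 2 / 2 ^ n with hδ
      have hε' : (0 : ℝ≥0∞) < ε := ENNReal.coe_pos.2 hε
      have hδ0 : ∀ n, 0 < δ n := fun n =>
        ENNReal.div_pos (ENNReal.div_pos hε'.ne' ENNReal.ofNat_ne_top).ne'
          (ENNReal.pow_ne_top ENNReal.ofNat_ne_top)
      have hδsum : ∑' n, δ n = (ε : ℝ≥0∞) := aux_geom _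
      have key2 : ∀ n, ∃ G : Set X, IsOpen G ∧ A n ⊆ G ∧ μ (G ∩ U n) ≤ μ (A n) + δ n := by
        intro n
        haveI : IsFiniteMeasure (μ.restrict (U n)) := ⟨by
          rw [Measure.restrict_apply_univ]; exact hUfin n⟩
        obtain ⟨G, F, hGo, hFc, hFA, hAG, hν⟩ :=
          regular_of_finite hq hi hom (μ.restrict (U n)) (hAb n) (δ n) (hδ0 n)
        refine ⟨G, hGo, hAG, ?_⟩
        have e2 : μ.restrict (U n) (A n) = μ (A n) := by
          rw [Measure.restrict_apply (hle _ (hAb n)), inter_eq_left.2 (hAsub n)]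
        calc μ (G ∩ U n) = μ.restrict (U n) G := (Measure.restrict_apply (hom G hGo)).symm
          _ ≤ μ.restrict (U n) F + δ n := hν
          _ ≤ μ.restrict (U n) (A n) + δ n := add_le_add_left (measure_mono hFA) _
          _ = μ (A n) + δ n := by rw [e2]
      choose G hGo hGsub hGν using key2
      refine ⟨⋃ n, G n ∩ U n, isOpen_iUnion (fun n => (hGo n).inter (hUopen n)), ?_, ?_⟩
      · intro x hx
        rw [← hAE] at hx
        obtain ⟨n, hn⟩ := mem_iUnion.1 hx
        exact mem_iUnion.2 ⟨n, hGsub n hn, hAsub n hn⟩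
      · have hsum : μ E = ∑' n, μ (A n) := by
          rw [← hAE]; exact measure_iUnion hAdisj (fun n => hle _ (hAb n))
        calc μ (⋃ n, G n ∩ U n) ≤ ∑' n, μ (G n ∩ U n) := measure_iUnion_le _
          _ ≤ ∑' n, (μ (A n) + δ n) := ENNReal.tsum_le_tsum hGν
          _ = (∑' n, μ (A n)) + ∑' n, δ n := ENNReal.tsum_add
          _ = μ E + ε := by rw [← hsum, hδsum]
  obtain ⟨G', hG'o, hEG', hμ⟩ := key
  exact le_trans (iInf_le_of_le G' (iInf_le_of_le hG'o (iInf_le_of_le hEG' le_rfl))) hμ
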